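/- arXiv:1803.06087 — 2 statements merged into one kernel-verified Lean document; each statement's English description precedes it below -/
import Mathlib

section
/- If p: ℝ² → ℝ is continuously differentiable and satisfies ⟨∇p(x,y), f₀(x,y)⟩ ≤ 0 for all (x,y) ∈ ℝ², then p is constant on M: there exists c ∈ ℝ such that p(x,y) = c for all (x,y) ∈ M. -/
/-- `W(x,y) = (x⁴+y⁴)/(x²+y²)` for `(x,y) ≠ (0,0)`, and `W(0,0) = 0`. -/
noncomputable def W (p : ℝ × ℝ) : ℝ :=
  if p = 0 then 0 else (p.1 ^ 4 + p.2 ^ 4) / (p.1 ^ 2 + p.2 ^ 2)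

def a (x y : ℝ) : ℝ := 2 * x * (x ^ 4 + 2 * x ^ 2 * y ^ 2 - y ^ 4)

def b (x y : ℝ) : ℝ := 2 * y * (-x ^ 4 + 2 * x ^ 2 * y ^ 2 + y ^ 4)

def f0 (p : ℝ × ℝ) : ℝ × ℝ := (-b p.1 p.2, a p.1 p.2)

/-- The `1`-level set of `W`. -/
def M : Set (ℝ × ℝ) := {p : ℝ × ℝ | W p = 1}

open Real

noncomputable def rr (t : ℝ) : ℝ := (Real.sqrt (Real.cos t ^ 4 + Real.sin t ^ 4))⁻¹

noncomputable def rr' (t : ℝ) : ℝ :=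
  2 * Real.cos t * Real.sin t * (Real.cos t ^ 2 - Real.sin t ^ 2) * rr t ^ 3

noncomputable def gam (t : ℝ) : ℝ × ℝ := (rr t * Real.cos t, rr t * Real.sin t)

noncomputable def gam' (t : ℝ) : ℝ × ℝ :=
  (rr' t * Real.cos t - rr t * Real.sin t, rr' t * Real.sin t + rr t * Real.cos t)

lemma q_pos (t : ℝ) : 0 < Real.cos t ^ 4 + Real.sin t ^ 4 := by
  nlinarith [Real.sin_sq_add_cos_sq t, sq_nonneg (Real.cos t ^ 2 - Real.sin t ^ 2)]

lemma rr_pos (t : ℝ) : 0 < rr t :=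
  inv_pos.2 (Real.sqrt_pos.2 (q_pos t))

lemma rr_sq (t : ℝ) : rr t ^ 2 * (Real.cos t ^ 4 + Real.sin t ^ 4) = 1 := by
  have h := q_pos t
  rw [rr, inv_pow, Real.sq_sqrt h.le]
  exact inv_mul_cancel₀ h.ne'

lemma hasDerivAt_rr (t : ℝ) : HasDerivAt rr (rr' t) t := by
  have hc := Real.hasDerivAt_cos t
  have hs := Real.hasDerivAt_sin t
  have hq : HasDerivAt (fun t => Real.cos t ^ 4 + Real.sin t ^ 4)
      (4 * Real.cos t ^ 3 * (-Real.sin t) + 4 * Real.sin t ^ 3 * Real.cos t) t := by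
    have h1 := hc.pow 4
    have h2 := hs.pow 4
    refine (h1.add h2).congr_deriv ?_
    norm_num
  have hS : HasDerivAt (fun t => Real.sqrt (Real.cos t ^ 4 + Real.sin t ^ 4))
      (1 / (2 * Real.sqrt (Real.cos t ^ 4 + Real.sin t ^ 4)) *
        (4 * Real.cos t ^ 3 * (-Real.sin t) + 4 * Real.sin t ^ 3 * Real.cos t)) t :=
    (Real.hasDerivAt_sqrt (q_pos t).ne').comp t hq
  have hSpos : 0 < Real.sqrt (Real.cos t ^ 4 + Real.sin t ^ 4) := Real.sqrt_pos.2 (q_pos t)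
  have := hS.inv hSpos.ne'
  refine this.congr_deriv ?_
  rw [rr', rr]
  set S := Real.sqrt (Real.cos t ^ 4 + Real.sin t ^ 4) with hSdef
  have hne : S ≠ 0 := hSpos.ne'
  field_simp
  ring

lemma hasDerivAt_gam (t : ℝ) : HasDerivAt gam (gam' t) t := by
  have h1 : HasDerivAt (fun t => rr t * Real.cos t)
      (rr' t * Real.cos t + rr t * (-Real.sin t)) t :=
    (hasDerivAt_rr t).mul (Real.hasDerivAt_cos t)
  have h2 : HasDerivAt (fun t => rr t * Real.sin t)
      (rr' t * Real.sin t + rr t * Real.cos t) t :=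
    (hasDerivAt_rr t).mul (Real.hasDerivAt_sin t)
  have := h1.prodMk h2
  refine this.congr_deriv (Eq.symm ?_)
  rw [gam']
  refine Prod.ext ?_ rfl
  show rr' t * Real.cos t - rr t * Real.sin t = _
  ring

def a' (x y : ℝ) : ℝ := 2 * x * (x ^ 4 + 2 * x ^ 2 * y ^ 2 - y ^ 4)

def b' (x y : ℝ) : ℝ := 2 * y * (-x ^ 4 + 2 * x ^ 2 * y ^ 2 + y ^ 4)

lemma key (t : ℝ) :
    ((-b' (gam t).1 (gam t).2, a' (gam t).1 (gam t).2) : ℝ × ℝ)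
      = (2 * rr t ^ 2) • gam' t := by
  have h2 := rr_sq t
  refine Prod.ext ?_ ?_
  · show -b' (rr t * Real.cos t) (rr t * Real.sin t)
      = 2 * rr t ^ 2 * (rr' t * Real.cos t - rr t * Real.sin t)
    rw [b', rr']
    linear_combination (-2 * rr t ^ 3 * Real.sin t) * h2
  · show a' (rr t * Real.cos t) (rr t * Real.sin t)
      = 2 * rr t ^ 2 * (rr' t * Real.sin t + rr t * Real.cos t)
    rw [a', rr']
    linear_combination (2 * rr t ^ 3 * Real.cos t) * h2


lemma f0_gam (t : ℝ) : f0 (gam t) = (2 * rr t ^ 2) • gam' t := by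
  rw [f0, show a = a' from rfl, show b = b' from rfl]
  exact key t

lemma gam_surj {v : ℝ × ℝ} (hv : v ∈ M) : ∃ t : ℝ, gam t = v := by
  have hv0 : v ≠ 0 := by
    rintro rfl
    simp [M, W] at hv
  have hz : (⟨v.1, v.2⟩ : ℂ) ≠ 0 := by
    intro h
    apply hv0
    have h1 : (⟨v.1, v.2⟩ : ℂ).re = 0 := by rw [h]; rfl
    have h2 : (⟨v.1, v.2⟩ : ℂ).im = 0 := by rw [h]; rfl
    exact Prod.ext h1 h2
  set z : ℂ := ⟨v.1, v.2⟩ with hzdef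
  set ρ := ‖z‖ with hρdef
  have hρpos : 0 < ρ := norm_pos_iff.mpr hz
  have hρ2 : ρ ^ 2 = v.1 ^ 2 + v.2 ^ 2 := by
    rw [hρdef, Complex.sq_norm, Complex.normSq_mk] ; ring
  set t := Complex.arg z with htdef
  have hcos : Real.cos t = v.1 / ρ := Complex.cos_arg hz
  have hsin : Real.sin t = v.2 / ρ := Complex.sin_arg z
  -- the level set equation
  have hsum2 : (0:ℝ) < v.1 ^ 2 + v.2 ^ 2 := by rw [← hρ2]; positivity
  have heq : v.1 ^ 4 + v.2 ^ 4 = v.1 ^ 2 + v.2 ^ 2 := by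
    have h := hv
    simp only [M, W, Set.mem_setOf_eq, if_neg hv0] at h
    field_simp at h
    linarith
  refine ⟨t, ?_⟩
  have hq : Real.cos t ^ 4 + Real.sin t ^ 4 = (ρ ^ 2)⁻¹ := by
    rw [hcos, hsin]
    have : ρ ^ 4 = (v.1 ^ 2 + v.2 ^ 2) ^ 2 := by rw [← hρ2]; ring
    field_simp
    nlinarith [heq, hρ2]
  have hrr : rr t = ρ := by
    rw [rr, hq, ← Real.sqrt_inv, inv_inv, Real.sqrt_sq hρpos.le]
  rw [gam, hrr, hcos, hsin]
  field_simp

/-- Any `C¹` function whose derivative along `f₀` is nonpositive everywhere is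
constant on `M`. -/
theorem stmt14 (p : ℝ × ℝ → ℝ) (hp : ContDiff ℝ 1 p)
    (hder : ∀ v : ℝ × ℝ, fderiv ℝ p v (f0 v) ≤ 0) :
    ∃ c : ℝ, ∀ v ∈ M, p v = c := by
  set g : ℝ → ℝ := fun t => p (gam t) with hgdef
  have hpd : Differentiable ℝ p := hp.differentiable one_ne_zero
  have hg : ∀ t : ℝ, HasDerivAt g (fderiv ℝ p (gam t) (gam' t)) t := fun t =>
    (hpd (gam t)).hasFDerivAt.comp_hasDerivAt t (hasDerivAt_gam t)
  have hg' : ∀ t : ℝ, fderiv ℝ p (gam t) (gam' t) ≤ 0 := by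
    intro t
    have h := hder (gam t)
    rw [f0_gam t, map_smul] at h
    have hpos : (0:ℝ) < 2 * rr t ^ 2 := by nlinarith [rr_pos t]
    simp only [smul_eq_mul] at h
    nlinarith
  have hanti : Antitone g := by
    refine antitone_of_deriv_nonpos (fun t => (hg t).differentiableAt) (fun t => ?_)
    rw [(hg t).deriv]; exact hg' t
  have hper : Function.Periodic g (2 * Real.pi) := by
    intro t
    have h1 : rr (t + 2 * Real.pi) = rr t := by
      rw [rr, rr, Real.cos_add_two_pi, Real.sin_add_two_pi]
    simp only [hgdef, gam, h1, Real.cos_add_two_pi, Real.sin_add_two_pi]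
  have hconst : ∀ s t : ℝ, s ≤ t → g s = g t := by
    intro s t hst
    refine le_antisymm ?_ (hanti hst)
    obtain ⟨n, hn⟩ := exists_nat_ge ((t - s) / (2 * Real.pi))
    have hpi : (0:ℝ) < 2 * Real.pi := by positivity
    have hle : t ≤ s + n * (2 * Real.pi) := by
      rw [div_le_iff₀ hpi] at hn
      linarith
    calc g s = g (s + n * (2 * Real.pi)) := ((hper.nat_mul n) s).symm
    _ ≤ g t := hanti hle
  refine ⟨g 0, fun v hv => ?_⟩
  obtain ⟨t, ht⟩ := gam_surj hv
  have hpg : p v = g t := (congrArg p ht).symm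
  rw [hpg]
  rcases le_total t 0 with h | h
  · exact hconst t 0 h
  · exact (hconst 0 t h).symm
end

section
/- The function V(x,y) = log(1 + x²) + y² is a global Lyapunov function for the vector field g(x,y) = (−x + xy, −y): V(0,0) = 0, V(x,y) > 0 for all (x,y) ≠ (0,0), V is radially unbounded (V(x,y) → ∞ as ‖(x,y)‖ → ∞), and ⟨∇V(x,y), g(x,y)⟩ < 0 for all (x,y) ≠ (0,0). -/
/-- The Lyapunov candidate `V(x,y) = log(1 + x²) + y²`. -/
noncomputable def V (p : ℝ × ℝ) : ℝ := Real.log (1 + p.1 ^ 2) + p.2 ^ 2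

/-- The vector field `g(x,y) = (-x + xy, -y)`. -/
def g (p : ℝ × ℝ) : ℝ × ℝ := (-p.1 + p.1 * p.2, -p.2)

lemma one_add_sq_pos (x : ℝ) : (0:ℝ) < 1 + x ^ 2 := by positivity

lemma hasFDerivV (p : ℝ × ℝ) :
    HasFDerivAt V ((1 + p.1 ^ 2)⁻¹ • ((2 * p.1) •
        (ContinuousLinearMap.fst ℝ ℝ ℝ)) +
      (2 * p.2) • (ContinuousLinearMap.snd ℝ ℝ ℝ)) p := by
  have hxsq : HasFDerivAt (fun q : ℝ × ℝ => q.1 ^ 2)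
      ((2 * p.1) • (ContinuousLinearMap.fst ℝ ℝ ℝ)) p := by
    have h := (hasFDerivAt_fst (p := p) (𝕜 := ℝ)).mul
      (hasFDerivAt_fst (p := p) (𝕜 := ℝ))
    have hfun : (fun q : ℝ × ℝ => q.1 * q.1) = fun q : ℝ × ℝ => q.1 ^ 2 := by
      ext q; ring
    rw [show (Prod.fst * Prod.fst : ℝ × ℝ → ℝ) = fun q => q.1 * q.1 from rfl, hfun] at h
    rw [two_mul, add_smul]
    exact h
  have hysq : HasFDerivAt (fun q : ℝ × ℝ => q.2 ^ 2)
      ((2 * p.2) • (ContinuousLinearMap.snd ℝ ℝ ℝ)) p := by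
    have h := (hasFDerivAt_snd (p := p) (𝕜 := ℝ)).mul
      (hasFDerivAt_snd (p := p) (𝕜 := ℝ))
    have hfun : (fun q : ℝ × ℝ => q.2 * q.2) = fun q : ℝ × ℝ => q.2 ^ 2 := by
      ext q; ring
    rw [show (Prod.snd * Prod.snd : ℝ × ℝ → ℝ) = fun q => q.2 * q.2 from rfl, hfun] at h
    rw [two_mul, add_smul]
    exact h
  have hu : HasFDerivAt (fun q : ℝ × ℝ => 1 + q.1 ^ 2)
      ((2 * p.1) • (ContinuousLinearMap.fst ℝ ℝ ℝ)) p := hxsq.const_add 1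
  have hlog := (Real.hasDerivAt_log (ne_of_gt (one_add_sq_pos p.1))).comp_hasFDerivAt p hu
  exact hlog.add hysq

/-- `V` is a global Lyapunov function for `g`: it vanishes at the origin, is
positive away from the origin, is radially unbounded, and its derivative along
`g` is negative away from the origin. -/
theorem stmt19 :
    V 0 = 0 ∧
    (∀ p : ℝ × ℝ, p ≠ 0 → V p > 0) ∧
    Filter.Tendsto V (Filter.cocompact (ℝ × ℝ)) Filter.atTop ∧
    (∀ p : ℝ × ℝ, p ≠ 0 → fderiv ℝ V p (g p) < 0) := by
  refine ⟨by simp [V], ?_, ?_, ?_⟩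
  · intro p hp
    have h2 : 0 ≤ p.2 ^ 2 := sq_nonneg _
    rcases eq_or_ne p.1 0 with hx | hx
    · have hy : p.2 ≠ 0 := fun hy => hp (Prod.ext hx hy)
      have h1 : 0 ≤ Real.log (1 + p.1 ^ 2) :=
        Real.log_nonneg (by nlinarith [sq_nonneg p.1])
      have : 0 < p.2 ^ 2 := by positivity
      unfold V; linarith
    · have hx2 : 0 < p.1 ^ 2 := by positivity
      have : 0 < Real.log (1 + p.1 ^ 2) := Real.log_pos (by linarith)
      unfold V; linarith
  · have hb : ∀ p : ℝ × ℝ, Real.log (1 + ‖p‖ ^ 2) ≤ V p := by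
      intro p
      have h1 : Real.log (1 + ‖p‖ ^ 2) ≤ Real.log ((1 + p.1 ^ 2) * (1 + p.2 ^ 2)) := by
        apply Real.log_le_log (by positivity)
        have hsq : ‖p‖ ^ 2 ≤ p.1 ^ 2 + p.2 ^ 2 := by
          rw [Prod.norm_def]
          rcases max_cases ‖p.1‖ ‖p.2‖ with ⟨h, _⟩ | ⟨h, _⟩ <;> rw [h] <;>
            simp only [Real.norm_eq_abs, sq_abs] <;>
            nlinarith [sq_nonneg p.1, sq_nonneg p.2]
        nlinarith [sq_nonneg (p.1 * p.2)]
      have h2 : Real.log ((1 + p.1 ^ 2) * (1 + p.2 ^ 2)) =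
          Real.log (1 + p.1 ^ 2) + Real.log (1 + p.2 ^ 2) :=
        Real.log_mul (by positivity) (by positivity)
      have h3 : Real.log (1 + p.2 ^ 2) ≤ p.2 ^ 2 := by
        have := Real.log_le_sub_one_of_pos (x := 1 + p.2 ^ 2) (by positivity)
        linarith
      unfold V; linarith
    have hn : Filter.Tendsto (fun p : ℝ × ℝ => ‖p‖) (Filter.cocompact _) Filter.atTop :=
      tendsto_norm_cocompact_atTop
    have h2 : Filter.Tendsto (fun p : ℝ × ℝ => 1 + ‖p‖ ^ 2) (Filter.cocompact _)
        Filter.atTop :=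
      Filter.tendsto_atTop_add_const_left _ 1
        ((Filter.tendsto_pow_atTop (two_ne_zero)).comp hn)
    exact Filter.tendsto_atTop_mono hb (Real.tendsto_log_atTop.comp h2)
  · intro p hp
    rw [(hasFDerivV p).fderiv]
    set x := p.1 with hxdef; set y := p.2 with hydef
    have hx2 : (0:ℝ) < 1 + x ^ 2 := one_add_sq_pos x
    have hval : ((1 + x ^ 2)⁻¹ • ((2 * x) • (ContinuousLinearMap.fst ℝ ℝ ℝ)) +
        (2 * y) • (ContinuousLinearMap.snd ℝ ℝ ℝ)) (g p) =
        (1 + x ^ 2)⁻¹ * (2 * x * (-x + x * y)) + 2 * y * (-y) := by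
      simp [g]
      rfl
    rw [hval]
    have hxy : x ≠ 0 ∨ y ≠ 0 := by
      by_contra h
      push_neg at h
      exact hp (Prod.ext h.1 h.2)
    have hprod : ((1 + x ^ 2)⁻¹ * (2 * x * (-x + x * y)) + 2 * y * (-y)) * (1 + x ^ 2)
        = 2 * x ^ 2 * (y - 1) - 2 * y ^ 2 * (1 + x ^ 2) := by
      field_simp
      ring
    have hrhs : 2 * x ^ 2 * (y - 1) - 2 * y ^ 2 * (1 + x ^ 2) < 0 := by
      rcases hxy with hx | hy
      · have h : 0 < x ^ 2 := by positivity
        nlinarith [sq_nonneg y, sq_nonneg (x * (2 * y - 1)), sq_nonneg (2 * y - 1)]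
      · have h : 0 < y ^ 2 := by positivity
        nlinarith [sq_nonneg x, sq_nonneg (x * (2 * y - 1))]
    have h0 : ((1 + x ^ 2)⁻¹ * (2 * x * (-x + x * y)) + 2 * y * (-y)) * (1 + x ^ 2)
        < 0 * (1 + x ^ 2) := by rw [hprod, zero_mul]; exact hrhs
    exact lt_of_mul_lt_mul_right h0 hx2.le
end
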